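/- Let A ⊆ ℝ^d with reach(A) > ρ > 0, let a ∈ A be such that Tan(A, a) = {t u : t ≥ 0} for a unit vector u, set P := {a − t u : 0 < t ≤ ρ/4} and A* := A ∪ P. Then reach(A*) ≥ ρ/4. -/

import Mathlib

open Metric Set Filter
open scoped ENNReal RealInnerProductSpace Topology NNReal

noncomputable section

variable {E : Type*} [NormedAddCommGroup E] [InnerProductSpace ℝ E]

/-- `x` has a unique nearest point in `A`. -/
def UnpPt (A : Set E) (x : E) : Prop :=
  ∃! a, a ∈ A ∧ dist x a = Metric.infDist x A

/-- The reach of `A` at a point `a` (Federer). -/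
def locReach (A : Set E) (a : E) : ℝ≥0∞ :=
  ⨆ (r : ℝ≥0) (_ : ∀ x : E, dist x a < (r : ℝ) → UnpPt A x), (r : ℝ≥0∞)

/-- The (global) reach of `A`. -/
def setReach (A : Set E) : ℝ≥0∞ := ⨅ a ∈ A, locReach A a

/-- The tangent cone of `A` at `a` in the sense of Federer. -/
def Tan (A : Set E) (a : E) : Set E :=
  {u | u = 0 ∨ ∃ (x : ℕ → E) (r : ℕ → ℝ),
    (∀ i, x i ∈ A ∧ x i ≠ a ∧ 0 < r i) ∧
    Tendsto x atTop (nhds a) ∧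
    Tendsto (fun i => r i • (x i - a)) atTop (nhds u)}

/-- The normal cone of `A` at `a`: the dual cone of the tangent cone. -/
def Nor (A : Set E) (a : E) : Set E :=
  {u | ∀ v ∈ Tan A a, ⟪u, v⟫ ≤ 0}

/-- Extract a real radius from the reach hypothesis. -/
lemma exists_radius {A : Set E} {b : E} {ρ : ℝ}
    (h : ENNReal.ofReal ρ < locReach A b) :
    ∃ r : ℝ, ρ < r ∧ ∀ x : E, dist x b < r → UnpPt A x := by
  rw [locReach, lt_iSup_iff] at h
  obtain ⟨r, hr⟩ := h
  rw [lt_iSup_iff] at hr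
  obtain ⟨hcond, hlt⟩ := hr
  refine ⟨r, ?_, hcond⟩
  by_contra hle
  push_neg at hle
  have : (r : ℝ≥0∞) ≤ ENNReal.ofReal ρ := by
    rw [← ENNReal.ofReal_coe_nnreal]
    exact ENNReal.ofReal_le_ofReal hle
  exact absurd hlt (not_lt.2 this)

lemma reach_loc {A : Set E} {ρ : ℝ} (hreach : ENNReal.ofReal ρ < setReach A) :
    ∀ b ∈ A, ∃ r : ℝ, ρ < r ∧ ∀ x : E, dist x b < r → UnpPt A x := by
  intro b hb
  exact exists_radius (lt_of_lt_of_le hreach (iInf₂_le b hb))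

/-- Positive reach implies closed. -/
lemma reach_closed {A : Set E} {ρ : ℝ} (hρ : 0 < ρ) (hne : A.Nonempty)
    (hloc : ∀ b ∈ A, ∃ r : ℝ, ρ < r ∧ ∀ x : E, dist x b < r → UnpPt A x) :
    IsClosed A := by
  rw [← closure_subset_iff_isClosed]
  intro c hc
  have hd0 : infDist c A = 0 := (mem_closure_iff_infDist_zero hne).mp hc
  obtain ⟨b, hb, hdb⟩ := (infDist_lt_iff hne).mp (by rw [hd0]; exact hρ)
  obtain ⟨r, hρr, hU⟩ := hloc b hb
  obtain ⟨p, ⟨hpA, hpd⟩, -⟩ := hU c (lt_trans hdb hρr)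
  have hcp : dist c p = 0 := by rw [hpd, hd0]
  rw [dist_eq_zero] at hcp
  rwa [hcp]

set_option linter.unusedSectionVars false
set_option maxHeartbeats 800000

/-- Normal extension: a normal direction (strictly negative on the ray tangent cone)
can be extended to length ρ. -/
lemma normal_ext {d : ℕ} {A : Set (EuclideanSpace ℝ (Fin d))} {ρ : ℝ} (hρ : 0 < ρ)
    (hA : IsClosed A) {a u : EuclideanSpace ℝ (Fin d)} (ha : a ∈ A) (hu : ‖u‖ = 1)
    (htan : Tan A a = {x | ∃ t : ℝ, 0 ≤ t ∧ x = t • u})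
    (hr : ∃ r : ℝ, ρ < r ∧ ∀ x, dist x a < r → UnpPt A x)
    {v : EuclideanSpace ℝ (Fin d)} (hv : ‖v‖ = 1) (hvu : ⟪v, u⟫ < 0) :
    ∀ s : ℝ, 0 ≤ s → s ≤ ρ → s ≤ infDist (a + s • v) A := by
  have hAne : A.Nonempty := ⟨a, ha⟩
  have hdista : ∀ s : ℝ, 0 ≤ s → dist (a + s • v) a = s := by
    intro s hs
    rw [dist_eq_norm]
    simp [norm_smul, hv, abs_of_nonneg hs]
  by_contra hcon
  push_neg at hcon
  obtain ⟨s0, hs00, hs0ρ, hs0⟩ := hcon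
  set B : Set ℝ := {s | (0 < s ∧ s ≤ ρ) ∧ infDist (a + s • v) A < s} with hB
  have hs0pos : 0 < s0 := lt_of_le_of_lt infDist_nonneg hs0
  have hBne : B.Nonempty := ⟨s0, ⟨hs0pos, hs0ρ⟩, hs0⟩
  have hBbdd : BddBelow B := ⟨0, fun s hs => (hs.1.1).le⟩
  have hσ0 : 0 ≤ sInf B := le_csInf hBne fun s hs => (hs.1.1).le
  have hσρ : sInf B ≤ ρ := le_trans (csInf_le hBbdd ⟨⟨hs0pos, hs0ρ⟩, hs0⟩) hs0ρ
  -- infDist at sInf B equals sInf B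
  have hDle : infDist (a + sInf B • v) A ≤ sInf B := by
    calc infDist (a + sInf B • v) A ≤ dist (a + sInf B • v) a := infDist_le_dist_of_mem ha
    _ = sInf B := hdista _ hσ0
  have hDeq : infDist (a + sInf B • v) A = sInf B := by
    by_contra hne
    have hlt : infDist (a + sInf B • v) A < sInf B := lt_of_le_of_ne hDle hne
    have hD0 : (0:ℝ) ≤ infDist (a + sInf B • v) A := infDist_nonneg
    set D := infDist (a + sInf B • v) A with hD
    set s : ℝ := sInf B - (sInf B - D)/4 with hs
    have hspos : 0 < s := by rw [hs]; linarith
    have hsmem : s ∈ B := by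
      refine ⟨⟨hspos, by rw [hs]; linarith⟩, ?_⟩
      have h2 : dist (a + s • v) (a + sInf B • v) = (sInf B - D)/4 := by
        rw [dist_eq_norm, show a + s • v - (a + sInf B • v) = (s - sInf B) • v by
          module]
        rw [norm_smul, hv, mul_one,
          show s - sInf B = -((sInf B - D)/4) by rw [hs]; ring, norm_neg,
          Real.norm_of_nonneg (by linarith)]
      have h1 : infDist (a + s • v) A ≤ D + (sInf B - D)/4 := by
        calc infDist (a + s • v) A
            ≤ infDist (a + sInf B • v) A + dist (a + s • v) (a + sInf B • v) :=
              infDist_le_infDist_add_dist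
          _ = D + (sInf B - D)/4 := by rw [← hD, h2]
      rw [hs]; linarith
    have := csInf_le hBbdd hsmem
    rw [hs] at this
    linarith
  -- unique nearest point of a + sInf B • v is a
  obtain ⟨r, hρr, hU⟩ := hr
  obtain ⟨p₀, hp₀, hup⟩ := hU (a + sInf B • v) (by rw [hdista _ hσ0]; linarith)
  have huniq : ∀ p, p ∈ A ∧ dist (a + sInf B • v) p = infDist (a + sInf B • v) A → p = a := by
    intro p hp
    rw [hup p hp, hup a ⟨ha, by rw [hdista _ hσ0, hDeq]⟩]
  -- sequence approaching sInf B from within B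
  obtain ⟨sq, hanti, hlim, hmem⟩ := exists_seq_tendsto_sInf hBne hBbdd
  have hex : ∀ n, ∃ y ∈ A, infDist (a + sq n • v) A = dist (a + sq n • v) y :=
    fun n => hA.exists_infDist_eq_dist hAne _
  choose b hbA hbd using hex
  have hsqpos : ∀ n, 0 < sq n := fun n => (hmem n).1.1
  have hsqρ : ∀ n, sq n ≤ ρ := fun n => (hmem n).1.2
  have hdb : ∀ n, dist (a + sq n • v) (b n) < sq n := fun n => by
    rw [← hbd n]; exact (hmem n).2
  have hbnea : ∀ n, b n ≠ a := by
    intro n h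
    have := hdb n
    rw [h, hdista _ (hsqpos n).le] at this
    exact lt_irrefl _ this
  have hkey : ∀ n, ‖b n - a‖^2 < 2 * sq n * ⟪v, b n - a⟫ := by
    intro n
    have h1 : dist (a + sq n • v) (b n) ^ 2 < sq n ^ 2 := by
      have := hdb n
      nlinarith [dist_nonneg (x := a + sq n • v) (y := b n)]
    rw [dist_eq_norm, show a + sq n • v - b n = sq n • v - (b n - a) by module,
      norm_sub_sq_real, norm_smul, hv, real_inner_smul_left] at h1
    simp only [mul_one, Real.norm_eq_abs] at h1
    rw [sq_abs] at h1
    linarith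
  have hipos : ∀ n, 0 < ⟪v, b n - a⟫ := by
    intro n
    have h0 : 0 < ‖b n - a‖^2 := by
      exact pow_pos (norm_pos_iff.2 (sub_ne_zero.2 (hbnea n))) 2
    nlinarith [hkey n, hsqpos n]
  have hbball : ∀ n, b n ∈ closedBall a (2*ρ) := by
    intro n
    rw [mem_closedBall]
    calc dist (b n) a ≤ dist (b n) (a + sq n • v) + dist (a + sq n • v) a := dist_triangle _ _ _
      _ ≤ sq n + sq n := by
          rw [dist_comm (b n), hdista _ (hsqpos n).le]
          exact add_le_add (hdb n).le le_rfl
      _ ≤ 2*ρ := by linarith [hsqρ n]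
  obtain ⟨c, hcball, φ, hφ, hbφ⟩ := (isCompact_closedBall a (2*ρ)).tendsto_subseq hbball
  have hcA : c ∈ A := hA.mem_of_tendsto hbφ (Filter.Eventually.of_forall fun n => hbA _)
  have hsqφ : Tendsto (fun n => sq (φ n)) atTop (𝓝 (sInf B)) := hlim.comp hφ.tendsto_atTop
  have hqφ : Tendsto (fun n => a + sq (φ n) • v) atTop (𝓝 (a + sInf B • v)) :=
    tendsto_const_nhds.add (hsqφ.smul tendsto_const_nhds)
  have hdtend : Tendsto (fun n => dist (a + sq (φ n) • v) (b (φ n))) atTop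
      (𝓝 (dist (a + sInf B • v) c)) := hqφ.dist hbφ
  have hdtend2 : Tendsto (fun n => dist (a + sq (φ n) • v) (b (φ n))) atTop
      (𝓝 (sInf B)) := by
    have h3 : Tendsto (fun n => infDist (a + sq (φ n) • v) A) atTop (𝓝 (sInf B)) := by
      have := ((continuous_infDist_pt A).tendsto (a + sInf B • v)).comp hqφ
      rwa [hDeq] at this
    refine h3.congr fun n => ?_
    exact hbd (φ n)
  have hca : c = a := by
    apply huniq
    refine ⟨hcA, ?_⟩
    rw [hDeq]
    exact tendsto_nhds_unique hdtend hdtend2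
  -- normalized directions
  set W : ℕ → EuclideanSpace ℝ (Fin d) := fun n => ‖b n - a‖⁻¹ • (b n - a) with hW
  have hWs : ∀ n, W (φ n) ∈ sphere (0 : EuclideanSpace ℝ (Fin d)) 1 := by
    intro n
    rw [mem_sphere_zero_iff_norm, hW, norm_smul, norm_inv, norm_norm]
    exact inv_mul_cancel₀ (norm_ne_zero_iff.2 (sub_ne_zero.2 (hbnea (φ n))))
  obtain ⟨w, hwsph, ψ, hψ, hWlim⟩ :=
    (isCompact_sphere (0 : EuclideanSpace ℝ (Fin d)) 1).tendsto_subseq hWs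
  have hwnorm : ‖w‖ = 1 := mem_sphere_zero_iff_norm.mp hwsph
  have hwTan : w ∈ Tan A a := by
    refine Or.inr ⟨fun i => b (φ (ψ i)), fun i => ‖b (φ (ψ i)) - a‖⁻¹, fun i =>
      ⟨hbA _, hbnea _, inv_pos.2 (norm_pos_iff.2 (sub_ne_zero.2 (hbnea _)))⟩, ?_, ?_⟩
    · have := hbφ.comp hψ.tendsto_atTop
      rwa [hca] at this
    · exact hWlim
  rw [htan] at hwTan
  obtain ⟨t, ht0, hw_eq⟩ := hwTan
  have ht1 : t = 1 := by
    have : ‖w‖ = t := by rw [hw_eq, norm_smul, hu, mul_one, Real.norm_of_nonneg ht0]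
    rw [hwnorm] at this; linarith
  have hip : 0 ≤ ⟪v, w⟫ := by
    apply ge_of_tendsto (Tendsto.inner tendsto_const_nhds hWlim)
    apply Filter.Eventually.of_forall
    intro i
    show 0 ≤ ⟪v, W (φ (ψ i))⟫
    rw [hW, real_inner_smul_right]
    have h1 := hipos (φ (ψ i))
    have h2 : (0:ℝ) < ‖b (φ (ψ i)) - a‖⁻¹ :=
      inv_pos.2 (norm_pos_iff.2 (sub_ne_zero.2 (hbnea _)))
    positivity
  rw [hw_eq, ht1, one_smul] at hip
  linarith

/-- Federer's inequality: normals (in the dual-cone sense) satisfy a quadratic bound. -/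
lemma inner_le_of_normal {d : ℕ} {A : Set (EuclideanSpace ℝ (Fin d))} {ρ : ℝ} (hρ : 0 < ρ)
    (hA : IsClosed A) {a u : EuclideanSpace ℝ (Fin d)} (ha : a ∈ A) (hu : ‖u‖ = 1)
    (htan : Tan A a = {x | ∃ t : ℝ, 0 ≤ t ∧ x = t • u})
    (hr : ∃ r : ℝ, ρ < r ∧ ∀ x, dist x a < r → UnpPt A x)
    {v : EuclideanSpace ℝ (Fin d)} (hv : ‖v‖ = 1) (hvu : ⟪v, u⟫ ≤ 0)
    {b : EuclideanSpace ℝ (Fin d)} (hb : b ∈ A) :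
    2 * ρ * ⟪v, b - a⟫ ≤ ‖b - a‖^2 := by
  have main : ∀ v' : EuclideanSpace ℝ (Fin d), ‖v'‖ = 1 → ⟪v', u⟫ < 0 →
      2 * ρ * ⟪v', b - a⟫ ≤ ‖b - a‖^2 := by
    intro v' h1 h2
    have h3 : ρ ≤ infDist (a + ρ • v') A :=
      normal_ext hρ hA ha hu htan hr h1 h2 ρ hρ.le le_rfl
    have h4 : ρ ≤ dist (a + ρ • v') b := le_trans h3 (infDist_le_dist_of_mem hb)
    have h5 : ρ^2 ≤ dist (a + ρ • v') b ^ 2 := by nlinarith [dist_nonneg (x := a + ρ • v') (y := b)]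
    rw [dist_eq_norm, show a + ρ • v' - b = ρ • v' - (b - a) by module,
      norm_sub_sq_real, norm_smul, h1, real_inner_smul_left] at h5
    simp only [mul_one, Real.norm_eq_abs, sq_abs] at h5
    linarith
  rcases lt_or_eq_of_le hvu with hlt | heq
  · exact main v hv hlt
  · -- perturb v slightly towards -u
    set f : ℕ → ℝ := fun n => ((n:ℝ) + 1)⁻¹ with hf
    have hfpos : ∀ n, 0 < f n := fun n => by positivity
    have hne : ∀ n, v - f n • u ≠ 0 := by
      intro n hzero
      have h1 : ⟪v - f n • u, u⟫ = 0 := by rw [hzero, inner_zero_left]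
      rw [inner_sub_left, real_inner_smul_left, real_inner_self_eq_norm_sq, hu, heq] at h1
      have := hfpos n
      nlinarith [h1]
    set vn : ℕ → EuclideanSpace ℝ (Fin d) := fun n => ‖v - f n • u‖⁻¹ • (v - f n • u) with hvn
    have hvnnorm : ∀ n, ‖vn n‖ = 1 := by
      intro n
      rw [hvn]
      simp only
      rw [norm_smul, norm_inv, norm_norm]
      exact inv_mul_cancel₀ (norm_ne_zero_iff.2 (hne n))
    have hvnu : ∀ n, ⟪vn n, u⟫ < 0 := by
      intro n
      rw [hvn]
      simp only
      rw [real_inner_smul_left, inner_sub_left, real_inner_smul_left,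
        real_inner_self_eq_norm_sq, hu, heq]
      have h1 : (0:ℝ) < ‖v - f n • u‖⁻¹ := inv_pos.2 (norm_pos_iff.2 (hne n))
      have h2 : (0:ℝ) - f n * 1^2 < 0 := by have := hfpos n; nlinarith
      exact mul_neg_of_pos_of_neg h1 h2
    have hlen : ∀ n, 2 * ρ * ⟪vn n, b - a⟫ ≤ ‖b - a‖^2 :=
      fun n => main (vn n) (hvnnorm n) (hvnu n)
    -- take the limit
    have hf0 : Tendsto f atTop (𝓝 0) := by
      have := tendsto_one_div_add_atTop_nhds_zero_nat (𝕜 := ℝ)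
      simpa [hf, one_div] using this
    have ht1 : Tendsto (fun n => v - f n • u) atTop (𝓝 v) := by
      have : Tendsto (fun n => v - f n • u) atTop (𝓝 (v - (0:ℝ) • u)) :=
        tendsto_const_nhds.sub (hf0.smul tendsto_const_nhds)
      simpa using this
    have ht2 : Tendsto (fun n => ‖v - f n • u‖⁻¹) atTop (𝓝 1) := by
      have := (ht1.norm).inv₀ (by rw [hv]; norm_num)
      rwa [hv, inv_one] at this
    have ht3 : Tendsto vn atTop (𝓝 v) := by
      have : Tendsto vn atTop (𝓝 ((1:ℝ) • v)) := ht2.smul ht1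
      simpa using this
    have ht4 : Tendsto (fun n => 2 * ρ * ⟪vn n, b - a⟫) atTop (𝓝 (2 * ρ * ⟪v, b - a⟫)) :=
      tendsto_const_nhds.mul (Tendsto.inner ht3 tendsto_const_nhds)
    exact le_of_tendsto ht4 (Filter.Eventually.of_forall hlen)

set_option maxHeartbeats 1600000
/-- Pure real-arithmetic contradiction for the mixed nearest-point case. -/
lemma arith_kill (ρ t c sg W Ee L dd ip Nx : ℝ)
    (h1 : 0 < ρ) (h2 : 0 < t) (h3 : t ≤ ρ/4) (h4 : c + t ≤ 0)
    (h5 : dd^2 = W^2 + (c+t)^2) (h6 : 0 ≤ dd) (h7 : dd < ρ/4)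
    (h8 : L^2 = Ee^2 + sg^2) (h9 : 0 ≤ W) (h10 : 0 ≤ Ee) (h11 : 0 ≤ L)
    (h12 : 2*ρ*(-sg) ≤ L^2) (h13 : 2*ρ*Ee ≤ L^2)
    (h14 : dd^2 = W^2 - 2*ip + Ee^2 + (c - sg)^2)
    (h15 : ip ≤ W*Ee)
    (h16 : Nx ≤ W + (-c)) (h17 : L ≤ dd + Nx) : False := by
  have hWdd : W ≤ dd := by nlinarith [sq_nonneg (c+t)]
  rcases le_or_gt 0 sg with hsg0 | hsg0
  · -- sg ≥ 0
    have c1 : 2*ρ*ip ≤ 2*ρ*(W*Ee) := by nlinarith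
    have c2 : W*Ee ≤ dd*Ee := mul_le_mul_of_nonneg_right hWdd h10
    have c2' : 2*ρ*(W*Ee) ≤ 2*ρ*(dd*Ee) := by nlinarith
    have c3 : dd*(2*ρ*Ee) ≤ dd*L^2 := mul_le_mul_of_nonneg_left h13 h6
    have c4 : dd*L^2 ≤ (ρ/4)*L^2 := mul_le_mul_of_nonneg_right h7.le (sq_nonneg L)
    have c5 : 2*ρ*ip ≤ (ρ/4)*L^2 := by nlinarith
    have expand : (c-sg)^2 - (c+t)^2 + Ee^2 = 2*ip := by linarith [h5, h14]
    nlinarith [c5, expand, h8,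
      mul_nonneg (mul_nonneg h1.le (by linarith : (0:ℝ) ≤ -(c+t))) h2.le,
      mul_nonneg (mul_nonneg h1.le (by linarith : (0:ℝ) ≤ -(c+t))) hsg0,
      mul_nonneg (mul_nonneg h1.le h2.le) hsg0,
      mul_pos h1 (mul_pos h2 h2),
      mul_nonneg h1.le (sq_nonneg sg), mul_nonneg h1.le (sq_nonneg Ee)]
  · -- sg < 0
    have hLne : L ≠ 0 := by
      intro h0
      rw [h0] at h8
      nlinarith [sq_nonneg Ee, sq_nonneg sg]
    have hL0 : 0 < L := lt_of_le_of_ne h11 (Ne.symm hLne)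
    have hβ : -(c+t) ≤ dd := by nlinarith [sq_nonneg W]
    have hLρ : L < ρ := by linarith
    have hL2 : L^2 < ρ^2 := by nlinarith
    have k1 : (2*ρ*(-sg))^2 ≤ (L^2)^2 := by
      have h0 : 0 ≤ 2*ρ*(-sg) := by nlinarith
      nlinarith [h12]
    have k2 : (2*ρ*Ee)^2 ≤ (L^2)^2 := by
      have h0 : 0 ≤ 2*ρ*Ee := by positivity
      nlinarith [h13]
    have kk : (L^2)^2 < ρ^2 * L^2 := by nlinarith [pow_pos hL0 2]
    nlinarith [k1, k2, h8, kk, mul_pos (pow_pos h1 2) (pow_pos hL0 2)]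

/-- Attaching a short segment in the direction opposite to a ray tangent cone keeps
positive reach. -/
theorem stmt5 {d : ℕ} (A : Set (EuclideanSpace ℝ (Fin d))) (ρ : ℝ) (hρ : 0 < ρ)
    (hreach : ENNReal.ofReal ρ < setReach A)
    (a u : EuclideanSpace ℝ (Fin d)) (ha : a ∈ A) (hu : ‖u‖ = 1)
    (htan : Tan A a = {x | ∃ t : ℝ, 0 ≤ t ∧ x = t • u}) :
    ENNReal.ofReal (ρ / 4) ≤
      setReach (A ∪ {x | ∃ t : ℝ, 0 < t ∧ t ≤ ρ / 4 ∧ x = a - t • u}) := by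
  classical
  have hloc := reach_loc hreach
  have hAne : A.Nonempty := ⟨a, ha⟩
  have hAcl : IsClosed A := reach_closed hρ hAne hloc
  have hra : ∃ r, ρ < r ∧ ∀ x, dist x a < r → UnpPt A x := hloc a ha
  set P : Set (EuclideanSpace ℝ (Fin d)) := {x | ∃ t : ℝ, 0 < t ∧ t ≤ ρ / 4 ∧ x = a - t • u}
    with hP
  have hmemP : ∀ s : ℝ, 0 ≤ s → s ≤ ρ/4 → a - s • u ∈ A ∪ P := by
    intro s hs0 hsρ
    rcases eq_or_lt_of_le hs0 with h0 | h0
    · left; rw [← h0]; simpa using ha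
    · right; exact ⟨s, h0, hsρ, rfl⟩
  -- A ∪ P is closed
  have hsegP : A ∪ P = A ∪ (fun θ : ℝ => a + θ • ((a - (ρ/4) • u) - a)) '' Icc (0:ℝ) 1 := by
    ext z
    simp only [mem_union, mem_image, mem_Icc, hP, mem_setOf_eq]
    constructor
    · rintro (hz | ⟨t, ht0, htρ, rfl⟩)
      · exact Or.inl hz
      · refine Or.inr ⟨t / (ρ/4), ⟨by positivity, by rw [div_le_one (by linarith)]; linarith⟩, ?_⟩
        rw [show a - (ρ/4) • u - a = -((ρ/4) • u) by module, smul_neg, smul_smul,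
          show t / (ρ/4) * (ρ/4) = t by field_simp]
        module
    · rintro (hz | ⟨θ, ⟨hθ0, hθ1⟩, rfl⟩)
      · exact Or.inl hz
      · rcases eq_or_lt_of_le hθ0 with h0 | h0
        · left; rw [← h0]; simpa using ha
        · right
          refine ⟨θ * (ρ/4), by positivity, by nlinarith, ?_⟩
          rw [show a - (ρ/4) • u - a = -((ρ/4) • u) by module, smul_neg, smul_smul]
          module
  have hA'cl : IsClosed (A ∪ P) := by
    rw [hsegP]
    exact hAcl.union (isCompact_Icc.image (by continuity)).isClosed
  have hA'ne : (A ∪ P).Nonempty := ⟨a, Or.inl ha⟩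
  have hIII : ∀ v : EuclideanSpace ℝ (Fin d), ‖v‖ = 1 → ⟪v, u⟫ ≤ 0 →
      ∀ b ∈ A, 2*ρ*⟪v, b - a⟫ ≤ ‖b - a‖^2 :=
    fun v hv hvu b hb => inner_le_of_normal hρ hAcl ha hu htan hra hv hvu hb
  -- key claim : unique nearest point property near A ∪ P
  have key : ∀ x, infDist x (A ∪ P) < ρ/4 → UnpPt (A ∪ P) x := by
    intro x hx
    obtain ⟨p₀, hp₀, hp₀d⟩ := hA'cl.exists_infDist_eq_dist hA'ne x
    set dd : ℝ := infDist x (A ∪ P) with hdd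
    have hdd0 : 0 ≤ dd := infDist_nonneg
    have hq_expand : ∀ s : ℝ, dist x (a - s • u) ^ 2 = ‖x - a‖^2 + 2*s*⟪x - a, u⟫ + s^2 := by
      intro s
      rw [dist_eq_norm, show x - (a - s • u) = (x - a) + s • u by module, norm_add_sq_real,
        real_inner_smul_right, norm_smul, hu, mul_one, Real.norm_eq_abs, sq_abs]
      ring
    have hsegdist : ∀ s : ℝ, 0 ≤ s → s ≤ ρ/4 → dd ≤ dist x (a - s • u) :=
      fun s h1 h2 => infDist_le_dist_of_mem (hmemP s h1 h2)
    -- no point of A is nearest if some segment point is nearest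
    have hkill : ∀ t : ℝ, 0 < t → t ≤ ρ/4 → dist x (a - t • u) = dd →
        ∀ p ∈ A, dist x p = dd → False := by
      intro t ht0 htρ hqd p hpA hpd
      set c : ℝ := ⟪x - a, u⟫ with hc
      -- c + t ≤ 0
      have hct : c + t ≤ 0 := by
        by_contra hcon
        push_neg at hcon
        set ε : ℝ := min t (c + t) with hε
        have hεpos : 0 < ε := lt_min ht0 hcon
        have hε1 : ε ≤ t := min_le_left _ _
        have hε2 : ε ≤ c + t := min_le_right _ _
        have i1 : dd ≤ dist x (a - (t - ε) • u) := hsegdist _ (by linarith) (by linarith)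
        have i2 : dd^2 ≤ dist x (a - (t - ε) • u) ^ 2 := pow_le_pow_left₀ hdd0 i1 2
        rw [hq_expand] at i2
        have i3 : dd^2 = ‖x - a‖^2 + 2*t*c + t^2 := by rw [← hqd, hq_expand]
        nlinarith [mul_le_mul_of_nonneg_left hε2 hεpos.le, mul_pos hεpos hεpos]
      -- decompositions
      set w : EuclideanSpace ℝ (Fin d) := (x - a) - c • u with hw
      have hwu : ⟪u, w⟫ = 0 := by
        rw [hw, inner_sub_right, real_inner_smul_right, real_inner_self_eq_norm_sq, hu,
          real_inner_comm, ← hc]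
        ring
      have horth : ∀ (z : EuclideanSpace ℝ (Fin d)) (α : ℝ), ⟪u, z⟫ = 0 →
          ‖z + α • u‖^2 = ‖z‖^2 + α^2 := by
        intro z α hz
        rw [norm_add_sq_real, real_inner_smul_right, real_inner_comm, hz, norm_smul, hu,
          mul_one, Real.norm_eq_abs, sq_abs]
        ring
      have hxa : ‖x - a‖^2 = ‖w‖^2 + c^2 := by
        rw [show x - a = w + c • u by rw [hw]; module]
        exact horth w c hwu
      have hd2 : dd^2 = ‖w‖^2 + (c + t)^2 := by
        have i3 : dd^2 = ‖x - a‖^2 + 2*t*c + t^2 := by rw [← hqd, hq_expand]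
        rw [i3, hxa]; ring
      set sg : ℝ := ⟪p - a, u⟫ with hsg
      set e : EuclideanSpace ℝ (Fin d) := (p - a) - sg • u with he
      have heu : ⟪u, e⟫ = 0 := by
        rw [he, inner_sub_right, real_inner_smul_right, real_inner_self_eq_norm_sq, hu,
          real_inner_comm, ← hsg]
        ring
      have hpa : ‖p - a‖^2 = ‖e‖^2 + sg^2 := by
        rw [show p - a = e + sg • u by rw [he]; module]
        exact horth e sg heu
      -- Federer inequalities
      have hsglow : 2*ρ*(-sg) ≤ ‖p - a‖^2 := by
        have := hIII (-u) (by rw [norm_neg, hu]) (by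
          rw [inner_neg_left, real_inner_self_eq_norm_sq, hu]; norm_num) p hpA
        rwa [inner_neg_left, real_inner_comm, ← hsg] at this
      have helow : 2*ρ*‖e‖ ≤ ‖p - a‖^2 := by
        rcases eq_or_ne e 0 with h0 | h0
        · rw [h0, norm_zero, mul_zero]; positivity
        · have hen : (0:ℝ) < ‖e‖ := norm_pos_iff.2 h0
          have hv1 : ‖(‖e‖⁻¹ • e : EuclideanSpace ℝ (Fin d))‖ = 1 := by
            rw [norm_smul, norm_inv, norm_norm]
            exact inv_mul_cancel₀ hen.ne'
          have hvu0 : ⟪(‖e‖⁻¹ • e : EuclideanSpace ℝ (Fin d)), u⟫ ≤ 0 := by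
            rw [real_inner_smul_left, real_inner_comm, heu, mul_zero]
          have h2 := hIII _ hv1 hvu0 p hpA
          have hip : ⟪e, p - a⟫ = ‖e‖^2 := by
            rw [show p - a = e + sg • u by rw [he]; module, inner_add_right,
              real_inner_smul_right, real_inner_comm u e, heu, real_inner_self_eq_norm_sq]
            ring
          rw [real_inner_smul_left, hip, show ‖e‖⁻¹ * ‖e‖^2 = ‖e‖ by
            rw [sq, ← mul_assoc, inv_mul_cancel₀ hen.ne', one_mul]] at h2
          exact h2
      -- distance from x to p
      have hxp : dist x p ^2 = ‖w - e‖^2 + (c - sg)^2 := by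
        rw [dist_eq_norm, show x - p = (w - e) + (c - sg) • u by rw [hw, he]; module]
        exact horth _ _ (by rw [inner_sub_right, hwu, heu]; ring)
      have hwe : ‖w - e‖^2 = ‖w‖^2 - 2*⟪w, e⟫ + ‖e‖^2 := norm_sub_sq_real w e
      have hweip : ⟪w, e⟫ ≤ ‖w‖*‖e‖ := real_inner_le_norm w e
      have h14 : dd^2 = ‖w‖^2 - 2*⟪w, e⟫ + ‖e‖^2 + (c - sg)^2 := by
        rw [← hpd, hxp, hwe]
      have hxan : ‖x - a‖ ≤ ‖w‖ + (-c) := by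
        calc ‖x - a‖ = ‖w + c • u‖ := by rw [show x - a = w + c • u by rw [hw]; module]
        _ ≤ ‖w‖ + ‖c • u‖ := norm_add_le _ _
        _ = ‖w‖ + (-c) := by
            rw [norm_smul, hu, mul_one, Real.norm_eq_abs, abs_of_nonpos (by linarith)]
      have hLd : ‖p - a‖ ≤ dd + ‖x - a‖ := by
        calc ‖p - a‖ = ‖(p - x) + (x - a)‖ := by rw [show p - x + (x - a) = p - a by abel]
        _ ≤ ‖p - x‖ + ‖x - a‖ := norm_add_le _ _
        _ = dd + ‖x - a‖ := by rw [← hpd, dist_eq_norm, norm_sub_rev]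
      exact arith_kill ρ t c sg ‖w‖ ‖e‖ ‖p - a‖ dd ⟪w, e⟫ ‖x - a‖ hρ ht0 htρ hct hd2 hdd0
        hx hpa (norm_nonneg w) (norm_nonneg e) (norm_nonneg (p - a)) hsglow helow h14 hweip
        hxan hLd
    -- both nearest points in A
    have hcaseA : ∀ p q, p ∈ A → q ∈ A → dist x p = dd → dist x q = dd → p = q := by
      intro p q hp hq hpd hqd
      have hdA : infDist x A = dd := by
        apply le_antisymm
        · rw [← hpd]; exact infDist_le_dist_of_mem hp
        · rw [hdd]; exact infDist_le_infDist_of_subset subset_union_left hAne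
      obtain ⟨r, hρr, hUp⟩ := hloc p hp
      obtain ⟨m, hm, hum⟩ := hUp x (by rw [hpd]; linarith)
      rw [hum p ⟨hp, by rw [hdA, hpd]⟩, hum q ⟨hq, by rw [hdA, hqd]⟩]
    -- both nearest points on the segment
    have hcaseP : ∀ t₁ t₂ : ℝ, 0 < t₁ → t₁ ≤ ρ/4 → 0 < t₂ → t₂ ≤ ρ/4 →
        dist x (a - t₁ • u) = dd → dist x (a - t₂ • u) = dd → t₁ = t₂ := by
      intro t₁ t₂ h10 h1ρ h20 h2ρ hd1 hd2
      have e1 : ‖x - a‖^2 + 2*t₁*⟪x - a, u⟫ + t₁^2 = dd^2 := by rw [← hq_expand, hd1]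
      have e2 : ‖x - a‖^2 + 2*t₂*⟪x - a, u⟫ + t₂^2 = dd^2 := by rw [← hq_expand, hd2]
      have i1 : dd ≤ dist x (a - ((t₁+t₂)/2) • u) := hsegdist _ (by linarith) (by linarith)
      have i2 : dd^2 ≤ ‖x - a‖^2 + 2*((t₁+t₂)/2)*⟪x - a, u⟫ + ((t₁+t₂)/2)^2 := by
        rw [← hq_expand]; exact pow_le_pow_left₀ hdd0 i1 2
      have hsq : (t₁ - t₂)^2 ≤ 0 := by nlinarith [e1, e2, i2]
      have : (t₁ - t₂)^2 = 0 := le_antisymm hsq (sq_nonneg _)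
      have := pow_eq_zero_iff (n := 2) (by norm_num) |>.mp this
      linarith [sub_eq_zero.mp this]
    -- pairwise uniqueness
    have pair : ∀ p q, p ∈ A ∪ P → q ∈ A ∪ P → dist x p = dd → dist x q = dd → p = q := by
      intro p q hp hq hpd hqd
      rcases hp with hpA | hpP
      · rcases hq with hqA | hqP
        · exact hcaseA p q hpA hqA hpd hqd
        · obtain ⟨t, ht0, htρ, rfl⟩ := hqP
          exact absurd hpd (fun h => hkill t ht0 htρ hqd p hpA h)
      · obtain ⟨t₁, h10, h1ρ, rfl⟩ := hpP
        rcases hq with hqA | hqP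
        · exact absurd hqd (fun h => hkill t₁ h10 h1ρ hpd q hqA h)
        · obtain ⟨t₂, h20, h2ρ, rfl⟩ := hqP
          rw [hcaseP t₁ t₂ h10 h1ρ h20 h2ρ hpd hqd]
    exact ⟨p₀, ⟨hp₀, hp₀d.symm⟩, fun y hy => pair y p₀ hy.1 hp₀ hy.2 hp₀d.symm⟩
  -- conclude
  rw [setReach]
  refine le_iInf fun b => le_iInf fun hb => ?_
  rw [locReach]
  have hcond : ∀ y : EuclideanSpace ℝ (Fin d),
      dist y b < (((ρ/4).toNNReal : ℝ≥0) : ℝ) → UnpPt (A ∪ P) y := by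
    intro y hy
    apply key
    have h1 : (((ρ/4).toNNReal : ℝ≥0) : ℝ) = ρ/4 := Real.coe_toNNReal _ (by linarith)
    calc infDist y (A ∪ P) ≤ dist y b := infDist_le_dist_of_mem hb
    _ < ρ/4 := by rwa [h1] at hy
  calc ENNReal.ofReal (ρ/4) = (((ρ/4).toNNReal : ℝ≥0) : ℝ≥0∞) := rfl
  _ ≤ _ := le_iSup₂ (f := fun (r : ℝ≥0) (_ : ∀ y, dist y b < (r:ℝ) → UnpPt (A ∪ P) y) =>
      (r : ℝ≥0∞)) ((ρ/4).toNNReal) hcond
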